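/- Let q be a prime power and p a prime with p ∤ q. Then μ(F_q,p) ≥ min{ m + p − r_m(p) : 1 ≤ m ≤ p }, where r_m(p) is the Szemerédi function. -/

import Mathlib

open Polynomial

/-- The ring R(F,n) = F[X]/(X^n - 1). -/
abbrev CycRing (F : Type*) [Field F] (n : ℕ) := AdjoinRoot (X ^ n - Polynomial.C (1 : F))

/-- The unique representative of degree < n of an element of F[X]/(X^n-1). -/
noncomputable def cycRep {F : Type*} [Field F] {n : ℕ} (f : CycRing F n) : F[X] :=
  if h : n = 0 then 0
  else AdjoinRoot.modByMonicHom (monic_X_pow_sub_C (1 : F) h) f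

/-- Hamming weight of an element of F[X]/(X^n-1): the number of nonzero coefficients of
its representative of degree < n. -/
noncomputable def cycWt {F : Type*} [Field F] {n : ℕ} (f : CycRing F n) : ℕ :=
  (cycRep f).support.card

/-- Minimum distance of a cyclic code (ideal of F[X]/(X^n-1)). -/
noncomputable def cycDist {F : Type*} [Field F] {n : ℕ} (I : Ideal (CycRing F n)) : ℕ :=
  sInf {w | ∃ f ∈ I, f ≠ 0 ∧ cycWt f = w}

/-- Dimension of a cyclic code as an F-vector space. -/
noncomputable def cycDim (F : Type*) [Field F] {n : ℕ} (I : Ideal (CycRing F n)) : ℕ :=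
  Module.finrank F (Submodule.restrictScalars F I)

/-- The invariant μ(F,n). -/
noncomputable def mu (F : Type*) [Field F] (n : ℕ) : ℕ :=
  sInf {w | ∃ f : CycRing F n, f ≠ 0 ∧
    cycDist (Ideal.span {f}) + cycDim F (Ideal.span {f}) = w}

/-- `S` contains an arithmetic progression of length `m` in ℤ/nℤ:
a set {a + k·b : k ∈ {0,…,m−1}} with b ≠ 0. -/
def ContainsAP {n : ℕ} (S : Set (ZMod n)) (m : ℕ) : Prop :=
  ∃ a b : ZMod n, b ≠ 0 ∧ ∀ k : ℕ, k < m → a + (k : ZMod n) * b ∈ S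

/-- The Szemerédi function r_m(n): the largest size of a subset of ℤ/nℤ not containing
an arithmetic progression of length m. -/
noncomputable def szemeredi (m n : ℕ) : ℕ :=
  sSup {c | ∃ S : Set (ZMod n), ¬ ContainsAP S m ∧ S.ncard = c}

section helpers
variable {F : Type*} [Field F] {p : ℕ}

lemma cycRep_mk (hp : p ≠ 0) (u : F[X]) :
    cycRep (AdjoinRoot.mk (X ^ p - C (1:F)) u) = u %ₘ (X ^ p - C (1:F)) := by
  rw [cycRep, dif_neg hp, AdjoinRoot.modByMonicHom_mk]

lemma mk_cycRep (hp : p ≠ 0) (c : CycRing F p) :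
    AdjoinRoot.mk (X ^ p - C (1:F)) (cycRep c) = c := by
  rw [cycRep, dif_neg hp]
  exact AdjoinRoot.mk_leftInverse (monic_X_pow_sub_C (1:F) hp) c

lemma cycRep_ne_zero (hp : p ≠ 0) {c : CycRing F p} (hc : c ≠ 0) : cycRep c ≠ 0 := by
  intro h
  apply hc
  rw [← mk_cycRep hp c, h, map_zero]

lemma cycRep_degree_lt (hp : p ≠ 0) (c : CycRing F p) : (cycRep c).degree < (p : ℕ) := by
  obtain ⟨u, rfl⟩ := AdjoinRoot.mk_surjective (g := X ^ p - C (1:F)) c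
  rw [cycRep_mk hp]
  have := degree_modByMonic_lt u (monic_X_pow_sub_C (1:F) hp)
  rwa [degree_X_pow_sub_C (Nat.pos_of_ne_zero hp)] at this

lemma cycRep_support_lt (hp : p ≠ 0) (c : CycRing F p) {t : ℕ}
    (ht : t ∈ (cycRep c).support) : t < p := by
  have h1 : (t : WithBot ℕ) ≤ (cycRep c).degree := le_degree_of_mem_supp t ht
  have := lt_of_le_of_lt h1 (cycRep_degree_lt hp c)
  exact_mod_cast this

end helpers

lemma pow_eq_pow_iff_modEq' {E : Type*} [Field E] {α : E} (hα0 : α ≠ 0) {n m : ℕ} :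
    α ^ n = α ^ m ↔ n ≡ m [MOD orderOf α] := by
  set u := Units.mk0 α hα0 with hu
  have hcoe : (u : E) = α := rfl
  have h1 : α ^ n = α ^ m ↔ u ^ n = u ^ m := by
    rw [← Units.val_inj, Units.val_pow_eq_pow_val, Units.val_pow_eq_pow_val, hcoe]
  rw [h1, pow_eq_pow_iff_modEq, ← orderOf_units, hcoe]

/-- Generalized BCH bound: if a polynomial with support in `[0,p)` vanishes at `α^(a+kb)` for
`k < ℓ` (an AP of exponents with `b ≠ 0`), then its weight exceeds `ℓ`. -/
lemma bch_aux {F E : Type*} [Field F] [Field E] (ι : F →+* E) {p : ℕ} [Fact p.Prime]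
    {α : E} (hα : IsPrimitiveRoot α p) {c : F[X]} (hc : c ≠ 0)
    (hsupp : ∀ t ∈ c.support, t < p) {ℓ : ℕ} {a b : ZMod p} (hb : b ≠ 0)
    (hroot : ∀ k : ℕ, k < ℓ → (c.map ι).eval (α ^ (a + (k : ZMod p) * b).val) = 0) :
    ℓ < c.support.card := by
  have hp : p.Prime := Fact.out
  by_contra hcon
  push_neg at hcon
  set d := c.support.card with hd
  have hord : orderOf α = p := hα.eq_orderOf.symm
  have hα0 : α ≠ 0 := by
    intro h
    have := hα.pow_eq_one
    rw [h, zero_pow hp.ne_zero] at this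
    exact zero_ne_one this
  set A := a.val with hA
  set B := b.val with hB
  -- key equations
  have hkey : ∀ k : ℕ, k < ℓ →
      ∑ t ∈ c.support, (ι (c.coeff t) * α ^ (A * t)) * (α ^ (B * t)) ^ k = 0 := by
    intro k hk
    have h0 := hroot k hk
    rw [eval_map, eval₂_eq_sum, sum_def] at h0
    rw [← h0]
    refine Finset.sum_congr rfl fun t ht => ?_
    have hV : (a + (k : ZMod p) * b).val ≡ A + k * B [MOD p] := by
      rw [← ZMod.natCast_eq_natCast_iff]
      push_cast
      rw [ZMod.natCast_val, ZMod.natCast_val, ZMod.natCast_val]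
      simp [ZMod.cast_id, mul_comm]
    have hVt : (a + (k : ZMod p) * b).val * t ≡ (A + k * B) * t [MOD p] := hV.mul_right t
    have heq : α ^ ((a + (k : ZMod p) * b).val * t) = α ^ ((A + k * B) * t) := by
      rw [pow_eq_pow_iff_modEq' hα0, hord]
      exact hVt
    symm
    calc ι (c.coeff t) * (α ^ (a + (k : ZMod p) * b).val) ^ t
        = ι (c.coeff t) * α ^ ((a + (k : ZMod p) * b).val * t) := by rw [← pow_mul]
      _ = ι (c.coeff t) * α ^ ((A + k * B) * t) := by rw [heq]
      _ = (ι (c.coeff t) * α ^ (A * t)) * (α ^ (B * t)) ^ k := by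
          rw [← pow_mul, mul_assoc, ← pow_add]
          ring_nf
  -- distinctness of α ^ (B * t)
  have hinj : ∀ t₁ ∈ c.support, ∀ t₂ ∈ c.support,
      α ^ (B * t₁) = α ^ (B * t₂) → t₁ = t₂ := by
    intro t₁ h₁ t₂ h₂ he
    rw [pow_eq_pow_iff_modEq' hα0, hord] at he
    have : ((B * t₁ : ℕ) : ZMod p) = ((B * t₂ : ℕ) : ZMod p) := by
      rwa [ZMod.natCast_eq_natCast_iff]
    push_cast at this
    rw [ZMod.natCast_val, ZMod.cast_id] at this
    have ht : (t₁ : ZMod p) = (t₂ : ZMod p) := mul_left_cancel₀ hb this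
    have e1 : ((t₁ : ZMod p)).val = t₁ := ZMod.val_cast_of_lt (hsupp t₁ h₁)
    have e2 : ((t₂ : ZMod p)).val = t₂ := ZMod.val_cast_of_lt (hsupp t₂ h₂)
    rw [← e1, ← e2, ht]
  -- set up the Vandermonde system
  set e := c.support.equivFin with he
  set G : Fin d → ℕ → E :=
    fun i t => (ι (c.coeff t) * α ^ (A * t)) * (α ^ (B * t)) ^ (i : ℕ) with hG
  have hvan := Matrix.eq_zero_of_forall_pow_sum_mul_pow_eq_zero (R := E) (n := d)
    (f := fun i => α ^ (B * ((e.symm i : ℕ))))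
    (v := fun i => ι (c.coeff (e.symm i)) * α ^ (A * ((e.symm i : ℕ))))
    (by
      intro i j hij
      simp only at hij
      have := hinj _ (e.symm i).2 _ (e.symm j).2 hij
      exact e.symm.injective (Subtype.ext this))
    (by
      intro i
      have hi : (i : ℕ) < ℓ := lt_of_lt_of_le i.2 hcon
      have h1 : ∑ j : Fin d, G i (e.symm j) = ∑ t ∈ c.support, G i t :=
        (Equiv.sum_comp e.symm (fun t : c.support => G i t)).trans
          (Finset.sum_coe_sort c.support (G i))
      exact h1.trans (hkey i hi))
  -- contradiction: coefficients vanish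
  obtain ⟨t, ht⟩ := support_nonempty.mpr hc
  have h0 := congrFun hvan (e ⟨t, ht⟩)
  simp only [Equiv.symm_apply_apply, Pi.zero_apply] at h0
  have hz : ι (c.coeff t) = 0 := by
    rcases mul_eq_zero.mp h0 with h | h
    · exact h
    · exact absurd h (pow_ne_zero _ hα0)
  exact (mem_support_iff.mp ht) (ι.injective (by rw [hz, map_zero]))

lemma dim_ge {F : Type*} [Field F] {p : ℕ} (hp0 : p ≠ 0) {g : F[X]} (hg0 : g ≠ 0)
    (hgdvd : g ∣ (X ^ p - C (1:F))) (I : Ideal (CycRing F p))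
    (hgI : AdjoinRoot.mk (X ^ p - C (1:F)) g ∈ I) :
    p - g.natDegree ≤ Module.finrank F (Submodule.restrictScalars F I) := by
  classical
  set π := AdjoinRoot.mk (X ^ p - C (1:F)) with hπ
  have hXp0 : (X ^ p - C (1:F)) ≠ 0 := (monic_X_pow_sub_C (1:F) hp0).ne_zero
  have hdegX : (X ^ p - C (1:F)).natDegree = p := natDegree_X_pow_sub_C
  have hdg : g.natDegree ≤ p := hdegX ▸ natDegree_le_of_dvd hgdvd hXp0
  haveI : Module.Finite F (CycRing F p) := (AdjoinRoot.powerBasis hXp0).finite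
  set k := p - g.natDegree with hk
  set v : Fin k → CycRing F p := fun i => π (g * X ^ (i : ℕ)) with hv
  have hvmem : ∀ i, v i ∈ I := by
    intro i
    rw [hv]
    simp only [map_mul]
    exact Ideal.mul_mem_right _ _ hgI
  have hli : LinearIndependent F v := by
    rw [Fintype.linearIndependent_iff]
    intro cc hcc i
    have hk0 : 0 < k := i.pos
    set h : F[X] := ∑ j : Fin k, cc j • (X : F[X]) ^ (j : ℕ) with hh
    have hπh : π (g * h) = 0 := by
      rw [hh, Finset.mul_sum, map_sum, ← hcc]
      refine Finset.sum_congr rfl fun j _ => ?_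
      simp only [hπ, hv, mul_smul_comm]
      rw [AdjoinRoot.smul_mk]
    have hdvd : (X ^ p - C (1:F)) ∣ g * h := AdjoinRoot.mk_eq_zero.mp hπh
    have hdegh : h.degree < (k : ℕ) := by
      rw [hh]
      refine lt_of_le_of_lt (degree_sum_le _ _) ?_
      rw [Finset.sup_lt_iff (by exact_mod_cast WithBot.bot_lt_coe k)]
      intro j _
      refine lt_of_le_of_lt (degree_smul_le _ _) ?_
      rw [degree_X_pow]
      exact_mod_cast j.2
    have hh0 : h = 0 := by
      by_contra hne
      have hgh0 : g * h ≠ 0 := mul_ne_zero hg0 hne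
      have h1 : p ≤ (g * h).natDegree := hdegX ▸ natDegree_le_of_dvd hdvd hgh0
      rw [natDegree_mul hg0 hne] at h1
      have h2 : h.natDegree < k := (natDegree_lt_iff_degree_lt hne).mpr hdegh
      omega
    have : h.coeff (i : ℕ) = cc i := by
      rw [hh, finset_sum_coeff]
      have : ∀ j : Fin k, (cc j • (X : F[X]) ^ (j : ℕ)).coeff (i : ℕ)
          = if j = i then cc j else 0 := by
        intro j
        rw [coeff_smul, coeff_X_pow]
        by_cases hji : j = i
        · simp [hji]
        · have : (i : ℕ) ≠ (j : ℕ) := fun hc => hji (Fin.ext hc.symm)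
          simp [this, hji]
      rw [Finset.sum_congr rfl fun j _ => this j, Finset.sum_ite_eq' Finset.univ i]
      simp
    rw [← this, hh0, coeff_zero]
  have hle : Submodule.span F (Set.range v) ≤ Submodule.restrictScalars F I := by
    rw [Submodule.span_le]
    rintro x ⟨i, rfl⟩
    exact hvmem i
  calc k = Fintype.card (Fin k) := (Fintype.card_fin k).symm
    _ = Module.finrank F (Submodule.span F (Set.range v)) := (finrank_span_eq_card hli).symm
    _ ≤ Module.finrank F (Submodule.restrictScalars F I) := Submodule.finrank_mono hle


/-- μ(F_q,p) ≥ min{ m + p − r_m(p) : 1 ≤ m ≤ p }. -/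
theorem mu_ge_szemeredi (q p : ℕ) (F : Type*) [Field F] [Fintype F]
    (hq : Fintype.card F = q) (hp : p.Prime) (hpq : ¬ p ∣ q) :
    sInf {v | ∃ m : ℕ, 1 ≤ m ∧ m ≤ p ∧ v = m + (p - szemeredi m p)} ≤ mu F p := by
  classical
  haveI : Fact p.Prime := ⟨hp⟩
  haveI : NeZero p := ⟨hp.ne_zero⟩
  have hp0 : p ≠ 0 := hp.ne_zero
  set E := AlgebraicClosure F with hE
  set ι : F →+* E := algebraMap F E with hι
  -- characteristic
  have hpF : (p : F) ≠ 0 := by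
    intro h
    obtain ⟨n, hr, hcard⟩ := FiniteField.card F (ringChar F)
    have hdvd : ringChar F ∣ p := (ringChar.spec F p).mp h
    have : ringChar F = p := (Nat.Prime.eq_one_or_self_of_dvd hp _ hdvd).resolve_left hr.one_lt.ne'
    apply hpq
    rw [← hq, hcard, ← this]
    exact dvd_pow_self _ (by positivity)
  have hpE : (p : E) ≠ 0 := by
    intro h
    apply hpF
    apply (algebraMap F E).injective
    rw [map_natCast, map_zero, h]
  haveI : NeZero ((p : E)) := ⟨hpE⟩
  obtain ⟨α, hα⟩ := HasEnoughRootsOfUnity.exists_primitiveRoot E p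
  have hord : orderOf α = p := hα.eq_orderOf.symm
  have hα0 : α ≠ 0 := by
    intro h
    have := hα.pow_eq_one
    rw [h, zero_pow hp0] at this
    exact zero_ne_one this
  have hXp0 : (X ^ p - C (1:F)) ≠ 0 := (monic_X_pow_sub_C (1:F) hp0).ne_zero
  have hdegX : (X ^ p - C (1:F)).natDegree = p := natDegree_X_pow_sub_C
  haveI : Module.Finite F (CycRing F p) := (AdjoinRoot.powerBasis hXp0).finite
  haveI : Nontrivial (CycRing F p) := by
    refine nontrivial_of_ne 1 0 ?_
    have : (1 : CycRing F p) = AdjoinRoot.mk _ (1 : F[X]) := (map_one _).symm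
    rw [this, Ne, AdjoinRoot.mk_eq_zero]
    intro hdvd
    have := natDegree_le_of_dvd hdvd one_ne_zero
    rw [hdegX, natDegree_one] at this
    omega
  -- the mu set is nonempty:
  have hMne : {w | ∃ f : CycRing F p, f ≠ 0 ∧
      cycDist (Ideal.span {f}) + cycDim F (Ideal.span {f}) = w}.Nonempty :=
    ⟨_, 1, one_ne_zero, rfl⟩
  obtain ⟨f, hf0, hfeq⟩ := Nat.sInf_mem hMne
  rw [mu, ← hfeq]
  set π := AdjoinRoot.mk (X ^ p - C (1:F)) with hπ
  set f₀ := cycRep f with hf₀def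
  have hf₀0 : f₀ ≠ 0 := cycRep_ne_zero hp0 hf0
  have hπf₀ : π f₀ = f := mk_cycRep hp0 f
  set g := EuclideanDomain.gcd (X ^ p - C (1:F)) f₀ with hgdef
  have hg0 : g ≠ 0 := by
    intro h
    exact hf₀0 (EuclideanDomain.gcd_eq_zero_iff.mp h).2
  have hgdvdX : g ∣ (X ^ p - C (1:F)) := EuclideanDomain.gcd_dvd_left _ _
  have hgdvdf₀ : g ∣ f₀ := EuclideanDomain.gcd_dvd_right _ _
  have hdg : g.natDegree ≤ p := hdegX ▸ natDegree_le_of_dvd hgdvdX hXp0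
  have hπg_mem : π g ∈ Ideal.span {f} := by
    rw [hgdef, EuclideanDomain.gcd_eq_gcd_ab, map_add, map_mul, map_mul]
    rw [hπ, AdjoinRoot.mk_self, zero_mul, zero_add, hπf₀]
    exact Ideal.mul_mem_right _ _ (Ideal.mem_span_singleton_self f)
  have hfspan : f ∈ Ideal.span {π g} := by
    obtain ⟨t, ht⟩ := hgdvdf₀
    rw [← hπf₀, ht, map_mul]
    exact Ideal.mul_mem_right _ _ (Ideal.mem_span_singleton_self (π g))
  have hdvd_rep : ∀ c ∈ Ideal.span {f}, g ∣ cycRep c := by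
    intro c hc
    have hc' : c ∈ Ideal.span {π g} := by
      refine Ideal.span_singleton_le_span_singleton.mpr ?_ hc
      exact (Ideal.mem_span_singleton.mp hfspan)
    obtain ⟨u, hu⟩ := Ideal.mem_span_singleton'.mp hc'
    obtain ⟨u', rfl⟩ := AdjoinRoot.mk_surjective u
    have hmk0 : π (cycRep c - u' * g) = 0 := by
      rw [map_sub, mk_cycRep hp0, map_mul, hu]
      · ring
    have hXdvd : (X ^ p - C (1:F)) ∣ (cycRep c - u' * g) := AdjoinRoot.mk_eq_zero.mp hmk0
    have : cycRep c = (cycRep c - u' * g) + u' * g := by ring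
    rw [this]
    exact dvd_add (dvd_trans hgdvdX hXdvd) (Dvd.intro_left u' rfl)
  -- the zero set Z
  have hsepg : g.Separable :=
    (separable_X_pow_sub_C (1:F) hpF one_ne_zero).of_dvd hgdvdX
  set Z : Set (ZMod p) := {i | aeval (α ^ i.val) g = 0} with hZdef
  set φ : ZMod p → E := fun i => α ^ i.val with hφ
  have hφinj : Function.Injective φ := by
    intro i j hij
    rw [hφ] at hij
    simp only at hij
    rw [pow_eq_pow_iff_modEq' hα0, hord] at hij
    have : i.val % p = j.val % p := hij
    rw [Nat.mod_eq_of_lt (ZMod.val_lt i), Nat.mod_eq_of_lt (ZMod.val_lt j)] at this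
    exact ZMod.val_injective p this
  have hφZ : φ '' Z = g.rootSet E := by
    ext β
    constructor
    · rintro ⟨i, hi, rfl⟩
      rw [mem_rootSet]
      exact ⟨hg0, hi⟩
    · intro hβ
      rw [mem_rootSet] at hβ
      have hβp : β ^ p = 1 := by
        obtain ⟨t, ht⟩ := hgdvdX
        have := congrArg (aeval β) ht
        rw [map_sub, map_pow, aeval_X, aeval_C, map_mul, hβ.2, zero_mul] at this
        rw [map_one] at this
        linear_combination this
      obtain ⟨i, hilt, hie⟩ := hα.eq_pow_of_pow_eq_one hβp
      refine ⟨(i : ZMod p), ?_, ?_⟩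
      · rw [hZdef, Set.mem_setOf_eq, ZMod.val_cast_of_lt hilt, hie]
        exact hβ.2
      · rw [hφ]
        simp only
        rw [ZMod.val_cast_of_lt hilt, hie]
  have hZcard : Z.ncard = g.natDegree := by
    have h1 : Z.ncard = (g.rootSet E).ncard := by
      rw [← hφZ, Set.ncard_image_of_injective Z hφinj]
    rw [h1, ← Nat.card_coe_set_eq, Nat.card_eq_fintype_card,
      card_rootSet_eq_natDegree hsepg (IsAlgClosed.splits _)]
  -- the AP length
  set L := {ℓ : ℕ | ContainsAP Z ℓ} with hLdef
  have h0L : 0 ∈ L := ⟨0, 1, one_ne_zero, fun k hk => absurd hk (Nat.not_lt_zero k)⟩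
  have hbddL : ∀ ℓ ∈ L, ℓ < p := by
    intro ℓ hℓ
    by_contra hcon
    push_neg at hcon
    obtain ⟨a, b, hb, hAP⟩ := hℓ
    have hZuniv : Z = Set.univ := by
      ext z
      simp only [Set.mem_univ, iff_true]
      have hk : ((z - a) * b⁻¹).val < p := ZMod.val_lt _
      have hz := hAP _ (lt_of_lt_of_le hk hcon)
      have : a + ((((z - a) * b⁻¹).val : ℕ) : ZMod p) * b = z := by
        rw [ZMod.natCast_val, ZMod.cast_id]
        field_simp
        ring
      rwa [this] at hz
    have hZp : (p : ℕ) = g.natDegree := by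
      rw [← hZcard, hZuniv, Set.ncard_univ, Nat.card_eq_fintype_card, ZMod.card]
    -- then g is an associate of X^p - 1, so the ideal is zero: contradiction
    obtain ⟨t, hgt⟩ := hgdvdX
    have ht0 : t ≠ 0 := by
      intro h
      rw [h, mul_zero] at hgt
      exact hXp0 hgt
    have hdegt : t.natDegree = 0 := by
      have := congrArg natDegree hgt
      rw [hdegX, natDegree_mul hg0 ht0] at this
      omega
    obtain ⟨u, hu⟩ := natDegree_eq_zero.mp hdegt
    have hu0 : u ≠ 0 := by
      intro h
      rw [h, map_zero] at hu
      exact ht0 hu.symm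
    have hmkg : π g = 0 := by
      have h2 : g = (X ^ p - C (1:F)) * C u⁻¹ := by
        rw [hgt, ← hu, mul_assoc, ← C_mul, mul_inv_cancel₀ hu0, C_1, mul_one]
      rw [h2, map_mul, hπ, AdjoinRoot.mk_self, zero_mul]
    rw [hmkg] at hfspan
    rw [Ideal.span_singleton_eq_bot.mpr rfl] at hfspan
    exact hf0 (Ideal.mem_bot.mp hfspan)
  have hLne : L.Nonempty := ⟨0, h0L⟩
  have hLbdd : BddAbove L := ⟨p, fun ℓ hℓ => (hbddL ℓ hℓ).le⟩
  set ℓs := sSup L with hℓs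
  have hℓmem : ℓs ∈ L := Nat.sSup_mem hLne hLbdd
  have hℓlt : ℓs < p := hbddL _ hℓmem
  set m := ℓs + 1 with hm
  have hnotAP : ¬ ContainsAP Z m := by
    intro h
    have : m ≤ ℓs := le_csSup hLbdd h
    omega
  have hszem : Z.ncard ≤ szemeredi m p := by
    apply le_csSup
    · refine ⟨p, ?_⟩
      rintro c ⟨S, -, rfl⟩
      calc S.ncard ≤ (Set.univ : Set (ZMod p)).ncard :=
            Set.ncard_le_ncard (Set.subset_univ S) Set.finite_univ
        _ = p := by rw [Set.ncard_univ, Nat.card_eq_fintype_card, ZMod.card]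
    · exact ⟨Z, hnotAP, rfl⟩
  -- distance bound
  have hdist : m ≤ cycDist (Ideal.span {f}) := by
    rw [cycDist]
    refine le_csInf ⟨cycWt f, f, Ideal.mem_span_singleton_self f, hf0, rfl⟩ ?_
    rintro w ⟨c, hcI, hc0, rfl⟩
    obtain ⟨a, b, hb, hAP⟩ := hℓmem
    obtain ⟨s, hs⟩ := hdvd_rep c hcI
    have hroot : ∀ k : ℕ, k < ℓs →
        ((cycRep c).map ι).eval (α ^ (a + (k : ZMod p) * b).val) = 0 := by
      intro k hk
      have hiZ : aeval (α ^ (a + (k : ZMod p) * b).val) g = 0 := hAP k hk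
      rw [aeval_def, ← eval_map] at hiZ
      rw [hs, Polynomial.map_mul, eval_mul, hiZ, zero_mul]
    have := bch_aux ι hα (cycRep_ne_zero hp0 hc0)
      (fun t ht => cycRep_support_lt hp0 c ht) hb hroot
    rw [cycWt]
    omega
  -- dimension bound
  have hdim : p - g.natDegree ≤ cycDim F (Ideal.span {f}) :=
    dim_ge hp0 hg0 hgdvdX _ hπg_mem
  -- conclusion
  have hfinal : m + (p - szemeredi m p) ≤ cycDist (Ideal.span {f}) + cycDim F (Ideal.span {f}) := by
    have h1 : p - szemeredi m p ≤ p - g.natDegree := by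
      rw [← hZcard]
      exact Nat.sub_le_sub_left hszem p
    have h2 : 1 ≤ m := by omega
    omega
  refine le_trans (Nat.sInf_le ⟨m, by omega, by omega, rfl⟩) hfinal
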